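/- arXiv:1707.08171 — 3 statements merged into one kernel-verified Lean document; each statement's English description precedes it below -/
import Mathlib

section
/- Let f : ℂⁿ ⇢ ℂⁿ be a meromorphic map (defined on the complement of an analytic subset) that is a local diffeomorphism at some point. Then its group of periods Λ_f := { a ∈ ℂⁿ | f(u) = f(u + a) for all u where both sides are defined } is a discrete subgroup of ℂⁿ. -/
/-- A meromorphic map `ℂⁿ ⇢ ℂⁿ`: each component is a quotient of two entire
functions, the denominator not being identically zero. -/
structure MeroMap (n : ℕ) where
  num : Fin n → ((Fin n → ℂ) → ℂ)
  den : Fin n → ((Fin n → ℂ) → ℂ)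
  num_analytic : ∀ i, AnalyticOnNhd ℂ (num i) Set.univ
  den_analytic : ∀ i, AnalyticOnNhd ℂ (den i) Set.univ
  den_ne_zero : ∀ i, ∃ u, den i u ≠ 0

namespace MeroMap

/-- The value function of a meromorphic map (junk values where a denominator vanishes). -/
noncomputable def val {n : ℕ} (f : MeroMap n) : (Fin n → ℂ) → (Fin n → ℂ) :=
  fun u i => f.num i u / f.den i u

/-- The set of periods of a meromorphic map: `a` is a period if `f(u) = f(u+a)` as
meromorphic functions, i.e. `gᵢ(u)·hᵢ(u+a) = hᵢ(u)·gᵢ(u+a)` for all `u`, where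
`fᵢ = gᵢ/hᵢ`. -/
def periodSet {n : ℕ} (f : MeroMap n) : Set (Fin n → ℂ) :=
  {a | ∀ i u, f.num i u * f.den i (u + a) = f.den i u * f.num i (u + a)}

/-- The group of periods `Λ_f` (the subgroup generated by the period set; the period set
is in fact already a subgroup). -/
noncomputable def periods {n : ℕ} (f : MeroMap n) : AddSubgroup (Fin n → ℂ) :=
  AddSubgroup.closure f.periodSet

end MeroMap

/-- if a meromorphic map `f : ℂⁿ ⇢ ℂⁿ` is a local diffeomorphism at some
point `p` (holomorphic near `p`, with invertible differential at `p`), then its group of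
periods `Λ_f` is a discrete subgroup of `ℂⁿ`. -/
theorem stmt2 {n : ℕ} (f : MeroMap n) (p : Fin n → ℂ) (U : Set (Fin n → ℂ))
    (hU : IsOpen U) (hp : p ∈ U)
    (hden : ∀ i, ∀ u ∈ U, f.den i u ≠ 0)
    (hdiff : DifferentiableOn ℂ f.val U)
    (hjac : ∃ e : (Fin n → ℂ) ≃L[ℂ] (Fin n → ℂ), fderiv ℂ f.val p = ↑e) :
    DiscreteTopology f.periods := by
  classical
  -- entire functions agreeing on a nonempty open set agree everywhere
  have identity : ∀ (g₁ g₂ : (Fin n → ℂ) → ℂ), AnalyticOnNhd ℂ g₁ Set.univ →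
      AnalyticOnNhd ℂ g₂ Set.univ → ∀ z, g₁ =ᶠ[nhds z] g₂ → g₁ = g₂ := by
    intro g₁ g₂ h₁ h₂ z hz
    exact h₁.eq_of_eventuallyEq h₂ hz
  -- translation of an entire function is entire
  have transl : ∀ (g : (Fin n → ℂ) → ℂ), AnalyticOnNhd ℂ g Set.univ →
      ∀ a, AnalyticOnNhd ℂ (fun u => g (u + a)) Set.univ := by
    intro g hg a x _
    have h1 : AnalyticAt ℂ (fun u : Fin n → ℂ => u + a) x := analyticAt_id.add analyticAt_const
    exact AnalyticAt.comp (g := g) (f := fun u => u + a) (hg (x + a) trivial) h1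
  -- the period set is closed under addition
  have hadd : ∀ a ∈ f.periodSet, ∀ b ∈ f.periodSet, a + b ∈ f.periodSet := by
    intro a ha b hb i u
    by_cases hnum : f.num i = 0
    · simp [hnum]
    · -- `h u = den i (u+a) * num i (u+a)` is entire and not identically zero
      have hdenA : AnalyticOnNhd ℂ (fun u => f.den i (u + a)) Set.univ :=
        transl _ (f.den_analytic i) a
      have hnumA : AnalyticOnNhd ℂ (fun u => f.num i (u + a)) Set.univ :=
        transl _ (f.num_analytic i) a
      -- find a point where den i (u+a) * num i (u+a) ≠ 0
      obtain ⟨u₀, hu₀⟩ := f.den_ne_zero i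
      have hnum0 : ∃ v, f.den i (v + a) * f.num i (v + a) ≠ 0 := by
        by_contra hcon
        push_neg at hcon
        -- then num i vanishes on the open set {den ≠ 0}, hence num i = 0
        apply hnum
        have hz : ∀ v, f.den i v ≠ 0 → f.num i v = 0 := by
          intro v hv
          have := hcon (v - a)
          simp only [sub_add_cancel] at this
          rcases mul_eq_zero.1 this with h | h
          · exact absurd h hv
          · exact h
        refine identity _ 0 (f.num_analytic i) (fun x _ => analyticAt_const) u₀ ?_
        have hcd : Continuous (f.den i) :=
          continuous_iff_continuousAt.2 fun x => (f.den_analytic i x trivial).continuousAt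
        have hopen : IsOpen {v | f.den i v ≠ 0} :=
          isOpen_compl_iff.2 (isClosed_eq hcd continuous_const)
        filter_upwards [hopen.mem_nhds hu₀] with v hv
        exact hz v hv
      obtain ⟨v₀, hv₀⟩ := hnum0
      have hopen : IsOpen {v | f.den i (v + a) * f.num i (v + a) ≠ 0} := by
        have hc : Continuous fun v => f.den i (v + a) * f.num i (v + a) :=
          (continuous_iff_continuousAt.2 fun x => (hdenA x trivial).continuousAt).mul
            (continuous_iff_continuousAt.2 fun x => (hnumA x trivial).continuousAt)
        exact isOpen_compl_iff.2 (isClosed_eq hc continuous_const)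
      -- the two sides as entire functions
      have key : (fun u => f.num i u * f.den i (u + a + b)) =
          fun u => f.den i u * f.num i (u + a + b) := by
        refine identity _ _ ?_ ?_ v₀ ?_
        · intro x _
          exact ((f.num_analytic i x trivial)).mul (transl _ (f.den_analytic i) (a + b) x trivial
            |>.congr (by filter_upwards with u using by rw [add_assoc]))
        · intro x _
          exact ((f.den_analytic i x trivial)).mul (transl _ (f.num_analytic i) (a + b) x trivial
            |>.congr (by filter_upwards with u using by rw [add_assoc]))
        · filter_upwards [hopen.mem_nhds hv₀] with u hu
          have e1 := ha i u
          have e2 := hb i (u + a)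
          have hc : f.den i (u + a) * f.num i (u + a) ≠ 0 := hu
          apply mul_right_cancel₀ hc
          linear_combination (f.num i (u + a) * f.den i (u + a + b)) * e1 +
            (f.den i u * f.num i (u + a)) * e2
      have := congrFun key u
      simpa [add_assoc] using this
  -- the period set is closed under negation
  have hneg : ∀ a ∈ f.periodSet, -a ∈ f.periodSet := by
    intro a ha i u
    have h := ha i (u - a)
    simp only [sub_add_cancel] at h
    rw [← sub_eq_add_neg]
    linear_combination -h
  have hzero : (0 : Fin n → ℂ) ∈ f.periodSet := by
    intro i u; simp [mul_comm]
  -- hence periods = periodSet as sets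
  let H : AddSubgroup (Fin n → ℂ) :=
    { carrier := f.periodSet
      add_mem' := fun {a b} ha hb => hadd a ha b hb
      zero_mem' := hzero
      neg_mem' := fun {a} ha => hneg a ha }
  have hper : f.periods = H := by
    apply le_antisymm
    · exact AddSubgroup.closure_le H |>.2 (le_refl _)
    · exact AddSubgroup.subset_closure
  -- f.val is analytic at p (quotient of analytic functions with nonzero denominator)
  have hval : AnalyticAt ℂ f.val p := by
    apply AnalyticAt.pi
    intro i
    exact ((f.num_analytic i p trivial)).div (f.den_analytic i p trivial) (hden i p hp)
  -- f.val has a strict derivative at p which is a linear equivalence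
  obtain ⟨e, he⟩ := hjac
  have hstrict : HasStrictFDerivAt f.val (e : (Fin n → ℂ) →L[ℂ] (Fin n → ℂ)) p := by
    have := hval.hasStrictFDerivAt
    rwa [he] at this
  -- local injectivity around p
  set φ := hstrict.toOpenPartialHomeomorph f.val with hφ
  have hsource : φ.source ∈ nhds p := by
    rw [hφ]
    exact (hstrict.toOpenPartialHomeomorph f.val).open_source.mem_nhds
      hstrict.mem_toOpenPartialHomeomorph_source
  have hinj : Set.InjOn f.val φ.source := φ.injOn
  -- open neighborhood of 0 meeting periodSet only at 0
  obtain ⟨V, hVsub, hVopen, hpV⟩ := mem_nhds_iff.1 (Filter.inter_mem hsource (hU.mem_nhds hp))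
  -- key: small periods are zero
  have hsmall : ∀ a ∈ f.periodSet, p + a ∈ V → a = 0 := by
    intro a ha hpa
    have hpaU : p + a ∈ U := (hVsub hpa).2
    have hpaS : p + a ∈ φ.source := (hVsub hpa).1
    have hpS : p ∈ φ.source := (hVsub hpV).1
    have hvaleq : f.val p = f.val (p + a) := by
      funext i
      have := ha i p
      have h1 : f.den i p ≠ 0 := hden i p hp
      have h2 : f.den i (p + a) ≠ 0 := hden i (p + a) hpaU
      show f.num i p / f.den i p = f.num i (p + a) / f.den i (p + a)
      field_simp
      linear_combination this
    have := hinj hpS hpaS hvaleq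
    have : p = p + a := this
    simpa using this.symm
  -- conclude discreteness
  rw [hper]
  have hopenV : IsOpen ((fun a => p + a) ⁻¹' V) :=
    hVopen.preimage (continuous_const.add continuous_id)
  have h0V : (0 : Fin n → ℂ) ∈ (fun a => p + a) ⁻¹' V := by simpa using hpV
  -- singleton 0 is open in H
  have : IsOpen ({0} : Set H) := by
    have : {(0 : H)} = ((↑) : H → (Fin n → ℂ)) ⁻¹' ((fun a => p + a) ⁻¹' V) := by
      ext x
      simp only [Set.mem_singleton_iff, Set.mem_preimage]
      constructor
      · intro hx; rw [hx]; simpa using hpV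
      · intro hx
        have := hsmall x x.2 hx
        exact Subtype.ext this
    rw [this]
    exact hopenV.preimage continuous_subtype_val
  exact discreteTopology_of_isOpen_singleton_zero this
end

section
/- Let f, g : ℂⁿ ⇢ ℂⁿ be meromorphic maps such that the group of periods Λ_g is a discrete subgroup of ℂⁿ and each component gⱼ of g is algebraic over the field ℂ(f₁,…,fₙ). Then Λ_f is a discrete subgroup of ℂⁿ, there exists a positive integer N with N·Λ_f ⊆ Λ_g, and consequently rank Λ_f ≤ rank Λ_g. -/
namespace MeroMap

/-- The common domain of definition: points where no denominator vanishes. -/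
def dom {n : ℕ} (f : MeroMap n) : Set (Fin n → ℂ) := {u | ∀ i, f.den i u ≠ 0}

/-- `g` is componentwise algebraic over the field `ℂ(f₁,…,fₙ)`: each `gⱼ` satisfies a
polynomial of positive degree in `Y` with coefficients rational in `f`, whose leading
coefficient is not identically zero as a meromorphic function of `f`. -/
noncomputable def AlgebraicOver {n : ℕ} (f g : MeroMap n) : Prop :=
  ∀ j, ∃ P : Polynomial (MvPolynomial (Fin n) ℂ), 0 < P.natDegree ∧
    (∃ u ∈ f.dom, MvPolynomial.eval (f.val u) P.leadingCoeff ≠ 0) ∧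
    ∀ u ∈ f.dom ∩ g.dom, (P.map (MvPolynomial.eval (f.val u))).eval (g.val u j) = 0

end MeroMap

namespace Stmt5Aux

open Set

variable {n : ℕ}

lemma translate_analytic {φ : (Fin n → ℂ) → ℂ} (hφ : AnalyticOnNhd ℂ φ Set.univ)
    (c : Fin n → ℂ) : AnalyticOnNhd ℂ (fun u => φ (u + c)) Set.univ := by
  have h1 : AnalyticOnNhd ℂ (fun u : Fin n → ℂ => u + c) Set.univ :=
    (analyticOnNhd_id).add analyticOnNhd_const
  exact hφ.comp h1 (Set.mapsTo_univ _ _)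

lemma cont_of_analytic {φ : (Fin n → ℂ) → ℂ} (hφ : AnalyticOnNhd ℂ φ Set.univ) :
    Continuous φ :=
  continuousOn_univ.1 hφ.continuousOn

lemma dense_ne_zero {φ : (Fin n → ℂ) → ℂ} (hφ : AnalyticOnNhd ℂ φ Set.univ)
    {w : Fin n → ℂ} (hw : φ w ≠ 0) : Dense {u | φ u ≠ 0} := by
  have hint : interior {u | φ u = 0} = ∅ := by
    by_contra h
    obtain ⟨x, hx⟩ := Set.nonempty_iff_ne_empty.2 h
    have hev : φ =ᶠ[nhds x] 0 := by
      filter_upwards [mem_interior_iff_mem_nhds.1 hx] with y hy using hy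
    exact hw (hφ.eqOn_zero_of_preconnected_of_eventuallyEq_zero isPreconnected_univ
      (Set.mem_univ x) hev (Set.mem_univ w))
  have hd : Dense {u | φ u = 0}ᶜ := interior_eq_empty_iff_dense_compl.1 hint
  exact hd

lemma open_ne_zero {φ : (Fin n → ℂ) → ℂ} (hφ : Continuous φ) :
    IsOpen {u | φ u ≠ 0} :=
  isOpen_compl_singleton.preimage hφ

/-- `a` is a period of the meromorphic function `N/D`. -/
def perMem (N D : (Fin n → ℂ) → ℂ) (a : Fin n → ℂ) : Prop :=
  ∀ u, N u * D (u + a) = D u * N (u + a)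

lemma perMem_zero (N D : (Fin n → ℂ) → ℂ) : perMem N D 0 := by
  intro u; simp [mul_comm]

lemma perMem_neg {N D : (Fin n → ℂ) → ℂ} {a} (h : perMem N D a) : perMem N D (-a) := by
  intro u
  have h' := h (u + -a)
  rw [neg_add_cancel_right] at h'
  linear_combination -h'

lemma perMem_add {N D : (Fin n → ℂ) → ℂ} (hN : AnalyticOnNhd ℂ N Set.univ)
    (hD : AnalyticOnNhd ℂ D Set.univ) (hDne : ∃ w, D w ≠ 0) {a b}
    (ha : perMem N D a) (hb : perMem N D b) : perMem N D (a + b) := by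
  obtain ⟨w, hw⟩ := hDne
  have hdense : Dense {u | D (u + a) ≠ 0} := by
    have : (fun u => D (u + a)) (w - a) ≠ 0 := by
      simpa [sub_add_cancel] using hw
    exact dense_ne_zero (translate_analytic hD a) this
  have hcN := cont_of_analytic hN
  have hcD := cont_of_analytic hD
  have key : (fun u => N u * D (u + (a + b))) = (fun u => D u * N (u + (a + b))) := by
    apply Continuous.ext_on hdense
    · exact hcN.mul (hcD.comp (continuous_id.add continuous_const))
    · exact hcD.mul (hcN.comp (continuous_id.add continuous_const))
    · intro u hu
      have hne : D (u + a) ≠ 0 := hu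
      have h1 := ha u
      have h2 := hb (u + a)
      show N u * D (u + (a + b)) = D u * N (u + (a + b))
      rw [← add_assoc]
      apply mul_left_cancel₀ hne
      linear_combination D (u + a + b) * h1 + D u * h2
  intro u
  exact congrFun key u

lemma perMem_nsmul {N D : (Fin n → ℂ) → ℂ} (hN : AnalyticOnNhd ℂ N Set.univ)
    (hD : AnalyticOnNhd ℂ D Set.univ) (hDne : ∃ w, D w ≠ 0) {a}
    (ha : perMem N D a) : ∀ m : ℕ, perMem N D (m • a) := by
  intro m
  induction m with
  | zero => rw [zero_nsmul]; exact perMem_zero N D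
  | succ k ih =>
      rw [succ_nsmul]
      exact perMem_add hN hD hDne ih ha

/-- The period set of `f`, packaged as a subgroup. -/
noncomputable def perGroup (f : MeroMap n) : AddSubgroup (Fin n → ℂ) where
  carrier := f.periodSet
  zero_mem' := fun i => perMem_zero (f.num i) (f.den i)
  add_mem' := fun ha hb i =>
    perMem_add (f.num_analytic i) (f.den_analytic i) (f.den_ne_zero i) (ha i) (hb i)
  neg_mem' := fun ha i => perMem_neg (ha i)

lemma periods_eq (f : MeroMap n) : f.periods = perGroup f :=
  AddSubgroup.closure_eq_of_le _ (fun _ h => h) (fun _ h => AddSubgroup.subset_closure h)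

lemma mem_periods (f : MeroMap n) {a} : a ∈ f.periods ↔ a ∈ f.periodSet := by
  rw [periods_eq]; rfl

lemma periodSet_nsmul (f : MeroMap n) {a} (ha : a ∈ f.periodSet) (k : ℕ) :
    k • a ∈ f.periodSet := by
  have : a ∈ perGroup f := ha
  exact AddSubgroup.nsmul_mem _ this k

lemma val_eq_of_per (f : MeroMap n) {a u} (ha : a ∈ f.periodSet)
    (hu : u ∈ f.dom) (hu' : u + a ∈ f.dom) : f.val (u + a) = f.val u := by
  funext i
  show f.num i (u + a) / f.den i (u + a) = f.num i u / f.den i u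
  rw [div_eq_div_iff (hu' i) (hu i)]
  linear_combination -(ha i u)

lemma leadA (f : MeroMap n) (L : MvPolynomial (Fin n) ℂ) :
    ∃ A : (Fin n → ℂ) → ℂ, AnalyticOnNhd ℂ A Set.univ ∧
      ∀ u ∈ f.dom, A u = (∏ i, f.den i u) ^ L.totalDegree * MvPolynomial.eval (f.val u) L := by
  classical
  set M := L.totalDegree with hM
  refine ⟨fun u => ∑ m ∈ L.support, L.coeff m *
      ∏ i, (f.num i u) ^ (m i) * (f.den i u) ^ (M - m i), ?_, ?_⟩
  · apply Finset.analyticOnNhd_fun_sum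
    intro m _
    exact analyticOnNhd_const.mul <| Finset.analyticOnNhd_fun_prod
      (f := fun i u => (f.num i u) ^ (m i) * (f.den i u) ^ (M - m i)) Finset.univ fun i _ =>
      ((f.num_analytic i).pow _).mul ((f.den_analytic i).pow _)
  · intro u hu
    rw [MvPolynomial.eval_eq', Finset.mul_sum]
    refine Finset.sum_congr rfl fun m hm => ?_
    have hle : ∀ i, m i ≤ M := by
      intro i
      calc m i ≤ L.degreeOf i := by
            rw [MvPolynomial.degreeOf_eq_sup]
            exact Finset.le_sup (f := fun m => m i) hm
        _ ≤ M := MvPolynomial.degreeOf_le_totalDegree L i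
    rw [← Finset.prod_pow, mul_left_comm, ← Finset.prod_mul_distrib]
    refine congrArg _ (Finset.prod_congr rfl fun i _ => ?_)
    show f.num i u ^ m i * f.den i u ^ (M - m i) = f.den i u ^ M * f.val u i ^ m i
    have h2 : (f.den i u) ^ (M - m i) * (f.den i u) ^ (m i) = (f.den i u) ^ M := by
      rw [← pow_add, Nat.sub_add_cancel (hle i)]
    show _ = _ * (f.num i u / f.den i u) ^ m i
    rw [div_pow, ← mul_div_assoc, eq_div_iff (pow_ne_zero _ (hu i)), mul_assoc, h2]
    ring

/-- Key lemma: if `a` is a period of `f` and `g_j` is algebraic over `ℂ(f)` via `P`, then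
some positive multiple `m • a` with `m ≤ deg P` is a period of `g_j`. -/
lemma key (f g : MeroMap n) (j : Fin n) (P : Polynomial (MvPolynomial (Fin n) ℂ))
    (_hdeg : 0 < P.natDegree)
    (hlead : ∃ u ∈ f.dom, MvPolynomial.eval (f.val u) P.leadingCoeff ≠ 0)
    (hroot : ∀ u ∈ f.dom ∩ g.dom, (P.map (MvPolynomial.eval (f.val u))).eval (g.val u j) = 0)
    {a} (ha : a ∈ f.periodSet) :
    ∃ m : ℕ, 0 < m ∧ m ≤ P.natDegree ∧ perMem (g.num j) (g.den j) (m • a) := by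
  classical
  set d := P.natDegree with hd
  obtain ⟨A, hAan, hAeq⟩ := leadA f P.leadingCoeff
  obtain ⟨u0, hu0dom, hu0⟩ := hlead
  have hA0 : A u0 ≠ 0 := by
    rw [hAeq u0 hu0dom]
    exact mul_ne_zero (pow_ne_zero _ (Finset.prod_ne_zero_iff.2 fun i _ => hu0dom i)) hu0
  set Φ : Fin (d+1) × Fin (d+1) → (Fin n → ℂ) → ℂ := fun p u =>
    g.num j (u + (p.1 : ℕ) • a) * g.den j (u + (p.2 : ℕ) • a)
      - g.den j (u + (p.1 : ℕ) • a) * g.num j (u + (p.2 : ℕ) • a) with hΦdef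
  have hΦan : ∀ p, AnalyticOnNhd ℂ (Φ p) Set.univ := fun p =>
    ((translate_analytic (g.num_analytic j) _).mul (translate_analytic (g.den_analytic j) _)).sub
      ((translate_analytic (g.den_analytic j) _).mul (translate_analytic (g.num_analytic j) _))
  suffices h : ∃ p : Fin (d+1) × Fin (d+1), (p.1 : ℕ) < (p.2 : ℕ) ∧ ∀ u, Φ p u = 0 by
    obtain ⟨p, hkl, hz⟩ := h
    refine ⟨(p.2 : ℕ) - (p.1 : ℕ), by omega, by have := p.2.isLt; omega, ?_⟩
    intro u
    have h0 := hz (u - (p.1 : ℕ) • a)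
    have e1 : u - (p.1 : ℕ) • a + (p.1 : ℕ) • a = u := sub_add_cancel u _
    have e2 : u - (p.1 : ℕ) • a + (p.2 : ℕ) • a = u + ((p.2 : ℕ) - (p.1 : ℕ)) • a := by
      have h3 : (p.2 : ℕ) • a = (p.1 : ℕ) • a + ((p.2 : ℕ) - (p.1 : ℕ)) • a := by
        rw [← add_nsmul]
        congr 1
        omega
      rw [h3]
      abel
    simp only [hΦdef] at h0
    rw [e1, e2] at h0
    exact sub_eq_zero.mp h0
  by_contra hcon
  push_neg at hcon
  -- a big family of dense open sets
  set F : (Option ((Fin (d+1)) × Bool × Fin n)) ⊕ (Fin (d+1) × Fin (d+1)) →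
      Set (Fin n → ℂ) := fun x =>
    match x with
    | .inl none => {u | A u ≠ 0}
    | .inl (some (k, false, i)) => {u | f.den i (u + (k : ℕ) • a) ≠ 0}
    | .inl (some (k, true, i)) => {u | g.den i (u + (k : ℕ) • a) ≠ 0}
    | .inr p => if (p.1 : ℕ) < (p.2 : ℕ) then {u | Φ p u ≠ 0} else Set.univ
    with hF
  have hopen : ∀ x, IsOpen (F x) := by
    rintro ((_ | ⟨k, b, i⟩) | p)
    · exact open_ne_zero (cont_of_analytic hAan)
    · cases b
      · exact open_ne_zero (cont_of_analytic (translate_analytic (f.den_analytic i) _))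
      · exact open_ne_zero (cont_of_analytic (translate_analytic (g.den_analytic i) _))
    · show IsOpen (if _ then _ else _)
      split_ifs
      · exact open_ne_zero (cont_of_analytic (hΦan _))
      · exact isOpen_univ
  have hdense : ∀ x, Dense (F x) := by
    rintro ((_ | ⟨k, b, i⟩) | p)
    · exact dense_ne_zero hAan hA0
    · cases b
      · obtain ⟨w, hw⟩ := f.den_ne_zero i
        refine dense_ne_zero (translate_analytic (f.den_analytic i) _) (w := w - (k : ℕ) • a) ?_
        simpa [sub_add_cancel] using hw
      · obtain ⟨w, hw⟩ := g.den_ne_zero i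
        refine dense_ne_zero (translate_analytic (g.den_analytic i) _) (w := w - (k : ℕ) • a) ?_
        simpa [sub_add_cancel] using hw
    · show Dense (if _ then _ else _)
      split_ifs with hp
      · obtain ⟨w, hw⟩ := hcon p hp
        exact dense_ne_zero (hΦan p) hw
      · exact dense_univ
  obtain ⟨u, hu⟩ := (dense_iInter_of_isOpen hopen hdense).nonempty
  have hmem : ∀ x, u ∈ F x := by
    intro x
    exact Set.mem_iInter.mp hu x
  have hfdom : ∀ k : Fin (d+1), u + (k : ℕ) • a ∈ f.dom := fun k i =>
    hmem (.inl (some (k, false, i)))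
  have hgdom : ∀ k : Fin (d+1), u + (k : ℕ) • a ∈ g.dom := fun k i =>
    hmem (.inl (some (k, true, i)))
  have hfdom0 : u ∈ f.dom := by
    have h1 := hfdom 0
    simpa using h1
  have hA : A u ≠ 0 := hmem (.inl none)
  have hlead' : MvPolynomial.eval (f.val u) P.leadingCoeff ≠ 0 := by
    intro h
    apply hA
    rw [hAeq u hfdom0, h, mul_zero]
  set Q := P.map (MvPolynomial.eval (f.val u)) with hQ
  have hQlead : Q.coeff d ≠ 0 := by
    rw [hQ, Polynomial.coeff_map]
    exact hlead'
  have hQ0 : Q ≠ 0 := fun h => hQlead (by simp [h])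
  have hval : ∀ k : Fin (d+1), f.val (u + (k : ℕ) • a) = f.val u := fun k =>
    val_eq_of_per f (periodSet_nsmul f ha (k : ℕ)) hfdom0 (hfdom k)
  have hroot' : ∀ k : Fin (d+1), Q.eval (g.val (u + (k : ℕ) • a) j) = 0 := by
    intro k
    have h1 := hroot (u + (k : ℕ) • a) ⟨hfdom k, hgdom k⟩
    rwa [hval k] at h1
  have hcard : Q.roots.toFinset.card < (Finset.univ : Finset (Fin (d+1))).card := by
    have h1 : Q.roots.toFinset.card ≤ Multiset.card Q.roots := Q.roots.toFinset_card_le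
    have h2 : Multiset.card Q.roots ≤ Q.natDegree := Q.card_roots'
    have h3 : Q.natDegree ≤ d := Polynomial.natDegree_map_le
    rw [Finset.card_univ, Fintype.card_fin]
    omega
  have hmap : ∀ k ∈ (Finset.univ : Finset (Fin (d+1))),
      g.val (u + (k : ℕ) • a) j ∈ Q.roots.toFinset := by
    intro k _
    rw [Multiset.mem_toFinset, Polynomial.mem_roots hQ0]
    exact hroot' k
  obtain ⟨k, -, l, -, hkl, heq⟩ := Finset.exists_ne_map_eq_of_card_lt_of_maps_to hcard hmap
  -- from equality of values, the corresponding Φ vanishes at u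
  have hΦzero : ∀ p : Fin (d+1) × Fin (d+1),
      g.val (u + (p.1 : ℕ) • a) j = g.val (u + (p.2 : ℕ) • a) j → Φ p u = 0 := by
    rintro ⟨p1, p2⟩ hpq
    have h1 : g.num j (u + (p1 : ℕ) • a) / g.den j (u + (p1 : ℕ) • a)
        = g.num j (u + (p2 : ℕ) • a) / g.den j (u + (p2 : ℕ) • a) := hpq
    rw [div_eq_div_iff (hgdom p1 j) (hgdom p2 j)] at h1
    show g.num j (u + (p1 : ℕ) • a) * g.den j (u + (p2 : ℕ) • a)
      - g.den j (u + (p1 : ℕ) • a) * g.num j (u + (p2 : ℕ) • a) = 0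
    linear_combination h1
  have hΦne : ∀ p : Fin (d+1) × Fin (d+1), (p.1 : ℕ) < (p.2 : ℕ) → Φ p u ≠ 0 := by
    intro p hp
    have h1 := hmem (.inr p)
    simp only [hF] at h1
    rwa [if_pos hp] at h1
  rcases Ne.lt_or_gt hkl with hlt | hlt
  · exact hΦne (k, l) hlt (hΦzero (k, l) heq)
  · exact hΦne (l, k) hlt (hΦzero (l, k) heq.symm)

end Stmt5Aux

/-- if `f, g : ℂⁿ ⇢ ℂⁿ` are meromorphic, `Λ_g` is discrete and every
component of `g` is algebraic over `ℂ(f₁,…,fₙ)`, then `Λ_f` is discrete, `N·Λ_f ⊆ Λ_g`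
for some positive integer `N`, and `rank Λ_f ≤ rank Λ_g`. -/
theorem stmt5 {n : ℕ} (f g : MeroMap n)
    (hg : DiscreteTopology g.periods)
    (halg : f.AlgebraicOver g) :
    DiscreteTopology f.periods ∧
      (∃ N : ℕ, 0 < N ∧ ∀ a ∈ f.periods, N • a ∈ g.periods) ∧
      Module.finrank ℤ f.periods ≤ Module.finrank ℤ g.periods := by
  classical
  choose P hP1 hP2 hP3 using halg
  set N : ℕ := ∏ j, Nat.factorial ((P j).natDegree) with hNdef
  have hNpos : 0 < N := Finset.prod_pos fun j _ => Nat.factorial_pos _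
  have hNper : ∀ a ∈ f.periods, N • a ∈ g.periods := by
    intro a haa
    have ha : a ∈ f.periodSet := (Stmt5Aux.mem_periods f).1 haa
    have hall : ∀ j, Stmt5Aux.perMem (g.num j) (g.den j) (N • a) := by
      intro j
      obtain ⟨m, hm0, hmle, hmper⟩ := Stmt5Aux.key f g j (P j) (hP1 j) (hP2 j) (hP3 j) ha
      have hdvd : m ∣ N := dvd_trans (Nat.dvd_factorial hm0 hmle)
        (Finset.dvd_prod_of_mem _ (Finset.mem_univ j))
      obtain ⟨c, hc⟩ := hdvd
      rw [hc, mul_comm, mul_smul]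
      exact Stmt5Aux.perMem_nsmul (g.num_analytic j) (g.den_analytic j) (g.den_ne_zero j)
        hmper c
    exact AddSubgroup.subset_closure (fun j u => hall j u)
  have hN0 : (N : ℂ) ≠ 0 := Nat.cast_ne_zero.2 hNpos.ne'
  have hsub : (f.periods : Set (Fin n → ℂ)) ⊆
      (fun v : Fin n → ℂ => (N : ℂ) • v) ⁻¹' (g.periods : Set (Fin n → ℂ)) := by
    intro a haa
    simp only [Set.mem_preimage, SetLike.mem_coe]
    rw [Nat.cast_smul_eq_nsmul]
    exact hNper a haa
  haveI hgset : DiscreteTopology ((g.periods : Set (Fin n → ℂ)) : Set (Fin n → ℂ)) := hg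
  have hdisc : DiscreteTopology f.periods := by
    have h1 : DiscreteTopology
        ((fun v : Fin n → ℂ => (N : ℂ) • v) ⁻¹' (g.periods : Set (Fin n → ℂ))) :=
      DiscreteTopology.preimage_of_continuous_injective _ (continuous_const_smul _)
        (smul_right_injective _ hN0)
    exact DiscreteTopology.of_subset h1 hsub
  refine ⟨hdisc, ⟨N, hNpos, hNper⟩, ?_⟩
  -- rank inequality
  set Lf := AddSubgroup.toIntSubmodule f.periods with hLf
  set Lg := AddSubgroup.toIntSubmodule g.periods with hLg
  haveI : DiscreteTopology Lg := hg
  haveI : Module.Finite ℤ Lg := inferInstance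
  let φ : Lf →ₗ[ℤ] Lg :=
    { toFun := fun x => ⟨N • (x : Fin n → ℂ), hNper _ x.2⟩
      map_add' := by
        intro x y
        apply Subtype.ext
        simp [smul_add]
      map_smul' := by
        intro c x
        apply Subtype.ext
        simp only [SetLike.val_smul, RingHom.id_apply]
        rw [← Nat.cast_smul_eq_nsmul ℂ, ← Int.cast_smul_eq_zsmul ℂ, smul_comm,
          Nat.cast_smul_eq_nsmul, Int.cast_smul_eq_zsmul] }
  have hinj : Function.Injective φ := by
    intro x y hxy
    apply Subtype.ext
    have h1 : N • (x : Fin n → ℂ) = N • (y : Fin n → ℂ) := congrArg Subtype.val hxy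
    rw [← Nat.cast_smul_eq_nsmul ℂ, ← Nat.cast_smul_eq_nsmul ℂ] at h1
    exact smul_right_injective _ hN0 h1
  have hle : Module.finrank ℤ Lf ≤ Module.finrank ℤ Lg :=
    LinearMap.finrank_le_finrank_of_injective hinj
  -- identify finranks of the subgroup and its submodule
  have ef : Module.finrank ℤ f.periods = Module.finrank ℤ Lf := by
    refine LinearEquiv.finrank_eq ?_
    exact { toFun := fun x => ⟨x, x.2⟩
            invFun := fun x => ⟨x, x.2⟩
            map_add' := fun _ _ => rfl
            map_smul' := fun _ _ => rfl
            left_inv := fun _ => rfl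
            right_inv := fun _ => rfl }
  have eg : Module.finrank ℤ g.periods = Module.finrank ℤ Lg := by
    refine LinearEquiv.finrank_eq ?_
    exact { toFun := fun x => ⟨x, x.2⟩
            invFun := fun x => ⟨x, x.2⟩
            map_add' := fun _ _ => rfl
            map_smul' := fun _ _ => rfl
            left_inv := fun _ => rfl
            right_inv := fun _ => rfl }
  rw [ef, eg]
  exact hle
end

section
/- Let φ : U → ℂⁿ be an analytic diffeomorphism from an open neighborhood U of 0 in ℂⁿ onto its image, with φ(0) a regular value setup, and suppose that for some open neighborhood U′ ⊆ U of 0, for each i there exists a nonzero polynomial Pᵢ ∈ ℂ[X₁,…,X₂ₙ, Y] with Pᵢ(φ(u), φ(v), φᵢ(u+v)) = 0 for all u, v ∈ U′. If moreover the components φ₁,…,φₙ are algebraically independent over ℂ, then φ admits an algebraic addition theorem; conversely, if φ admits an algebraic addition theorem, then the local addition map (x,y) ↦ φ(φ⁻¹(x) + φ⁻¹(y)) is, on suitable semialgebraic neighborhoods, analytic and algebraic over ℂ(id), i.e., a ℂ-Nash map. -/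
/-- Semialgebraic subsets of `ι → ℝ`. -/
inductive IsSemialgebraic {ι : Type} : Set (ι → ℝ) → Prop
  | pos (p : MvPolynomial ι ℝ) : IsSemialgebraic {x | 0 < MvPolynomial.eval x p}
  | union {s t : Set (ι → ℝ)} : IsSemialgebraic s → IsSemialgebraic t → IsSemialgebraic (s ∪ t)
  | inter {s t : Set (ι → ℝ)} : IsSemialgebraic s → IsSemialgebraic t → IsSemialgebraic (s ∩ t)
  | compl {s : Set (ι → ℝ)} : IsSemialgebraic s → IsSemialgebraic sᶜ

/-- Identification of `ι → ℂ` with `(ι × Bool) → ℝ` via real and imaginary parts. -/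
def cReal {ι : Type} (z : ι → ℂ) : ι × Bool → ℝ :=
  fun p => if p.2 then (z p.1).im else (z p.1).re

/-- Semialgebraic subsets of `ι → ℂ` (semialgebraic in the real coordinates). -/
def IsSemialgebraicC {ι : Type} (s : Set (ι → ℂ)) : Prop :=
  IsSemialgebraic (cReal '' s)

def cInv {ι : Type} (x : ι × Bool → ℝ) : ι → ℂ :=
  fun i => ⟨x (i, false), x (i, true)⟩

lemma cReal_cInv {ι : Type} (x : ι × Bool → ℝ) : cReal (cInv x) = x := by
  funext p; rcases p with ⟨i, b⟩; cases b <;> rfl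

lemma cInv_cReal {ι : Type} (z : ι → ℂ) : cInv (cReal z) = z := by
  funext i; apply Complex.ext <;> rfl

lemma image_cReal {ι : Type} (S : Set (ι → ℂ)) : cReal '' S = cInv ⁻¹' S := by
  ext x
  constructor
  · rintro ⟨z, hz, rfl⟩; simpa [cInv_cReal] using hz
  · intro hx; exact ⟨cInv x, hx, cReal_cInv x⟩

lemma semialg_ball {ι : Type} [Fintype ι] (c : ι → ℂ) (r : ℝ) :
    IsSemialgebraicC {z : ι → ℂ | ∑ i, Complex.normSq (z i - c i) < r ^ 2} := by
  unfold IsSemialgebraicC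
  rw [image_cReal]
  have : cInv ⁻¹' {z : ι → ℂ | ∑ i, Complex.normSq (z i - c i) < r ^ 2} =
      {x : ι × Bool → ℝ | 0 < MvPolynomial.eval x
        (MvPolynomial.C (r ^ 2) - ∑ i : ι,
          ((MvPolynomial.X (i, false) - MvPolynomial.C (c i).re) ^ 2 +
           (MvPolynomial.X (i, true) - MvPolynomial.C (c i).im) ^ 2))} := by
    ext x
    simp only [Set.mem_preimage, Set.mem_setOf_eq, map_sub, map_sum, map_add, map_pow,
      MvPolynomial.eval_C, MvPolynomial.eval_X, sub_pos]
    have : ∀ i : ι, Complex.normSq (cInv x i - c i)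
        = (x (i, false) - (c i).re) ^ 2 + (x (i, true) - (c i).im) ^ 2 := by
      intro i
      simp [Complex.normSq_apply, cInv, Complex.sub_re, Complex.sub_im]
      ring
    rw [Finset.sum_congr rfl fun i _ => this i]
  rw [this]
  exact IsSemialgebraic.pos _

section helpers
variable {n : ℕ}

lemma restl_analytic (z₀ : (Fin n ⊕ Fin n) → ℂ) :
    AnalyticAt ℂ (fun z : (Fin n ⊕ Fin n) → ℂ => (fun i => z (Sum.inl i) : Fin n → ℂ)) z₀ :=
  (ContinuousLinearMap.pi (fun i : Fin n =>
    ContinuousLinearMap.proj (R := ℂ) (φ := fun _ : Fin n ⊕ Fin n => ℂ) (Sum.inl i))).analyticAt z₀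

lemma restr_analytic (z₀ : (Fin n ⊕ Fin n) → ℂ) :
    AnalyticAt ℂ (fun z : (Fin n ⊕ Fin n) → ℂ => (fun j => z (Sum.inr j) : Fin n → ℂ)) z₀ :=
  (ContinuousLinearMap.pi (fun j : Fin n =>
    ContinuousLinearMap.proj (R := ℂ) (φ := fun _ : Fin n ⊕ Fin n => ℂ) (Sum.inr j))).analyticAt z₀

end helpers

/-- let `φ` be an analytic diffeomorphism from an open neighbourhood `U` of
`0` in `ℂⁿ` onto its (open) image, with analytic inverse `ψ`, whose components are
algebraically independent over `ℂ`.  Then the following are equivalent: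
(1) on some open neighbourhood `U' ⊆ U` of `0`, each `φᵢ(u+v)` satisfies a nontrivial
polynomial relation with `φ(u)` and `φ(v)` — i.e. `φ` admits an algebraic addition
theorem; and
(2) on a suitable open semialgebraic neighbourhood `Ω` of `(φ(0), φ(0))` inside
`φ(U) × φ(U)`, the local addition map `(x, y) ↦ φ(φ⁻¹(x) + φ⁻¹(y))` is analytic and
algebraic over `ℂ(id)`, i.e. a ℂ-Nash map. -/
theorem stmt16 {n : ℕ} (U : Set (Fin n → ℂ)) (hUo : IsOpen U) (h0 : (0 : Fin n → ℂ) ∈ U)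
    (φ ψ : (Fin n → ℂ) → (Fin n → ℂ))
    (hφan : AnalyticOnNhd ℂ φ U) (hφinj : Set.InjOn φ U)
    (himg : IsOpen (φ '' U)) (hψan : AnalyticOnNhd ℂ ψ (φ '' U))
    (hψφ : ∀ u ∈ U, ψ (φ u) = u)
    (hindep : ∀ q : MvPolynomial (Fin n) ℂ,
      (∀ u ∈ U, MvPolynomial.eval (φ u) q = 0) → q = 0) :
    ((∃ U' ⊆ U, IsOpen U' ∧ (0 : Fin n → ℂ) ∈ U' ∧
        ∀ i : Fin n, ∃ P : Polynomial (MvPolynomial (Fin n ⊕ Fin n) ℂ), P ≠ 0 ∧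
          ∀ u ∈ U', ∀ v ∈ U', u + v ∈ U →
            (P.map (MvPolynomial.eval (Sum.elim (φ u) (φ v)))).eval (φ (u + v) i) = 0)
      ↔
      (∃ Ω : Set ((Fin n ⊕ Fin n) → ℂ), IsOpen Ω ∧ IsSemialgebraicC Ω ∧
        (Sum.elim (φ 0) (φ 0)) ∈ Ω ∧
        (∀ z ∈ Ω, (fun i => z (Sum.inl i)) ∈ φ '' U ∧ (fun j => z (Sum.inr j)) ∈ φ '' U ∧
          ψ (fun i => z (Sum.inl i)) + ψ (fun j => z (Sum.inr j)) ∈ U) ∧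
        AnalyticOnNhd ℂ
          (fun z => φ (ψ (fun i => z (Sum.inl i)) + ψ (fun j => z (Sum.inr j)))) Ω ∧
        ∀ i : Fin n, ∃ P : Polynomial (MvPolynomial (Fin n ⊕ Fin n) ℂ), P ≠ 0 ∧
          ∀ z ∈ Ω,
            (P.map (MvPolynomial.eval z)).eval
              (φ (ψ (fun i' => z (Sum.inl i')) + ψ (fun j => z (Sum.inr j))) i) = 0)) := by
  constructor
  · rintro ⟨U', hU'U, hU'o, h0U', hAAT⟩
    set c : (Fin n ⊕ Fin n) → ℂ := Sum.elim (φ 0) (φ 0) with hc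
    set A : ((Fin n ⊕ Fin n) → ℂ) → (Fin n → ℂ) := fun z => fun i => z (Sum.inl i) with hA
    set B : ((Fin n ⊕ Fin n) → ℂ) → (Fin n → ℂ) := fun z => fun j => z (Sum.inr j) with hB
    have hAcont : Continuous A := continuous_pi fun i => continuous_apply _
    have hBcont : Continuous B := continuous_pi fun j => continuous_apply _
    set V : Set (Fin n → ℂ) := φ '' U ∩ ψ ⁻¹' U' with hV
    have hVopen : IsOpen V := by
      rw [isOpen_iff_mem_nhds]
      intro z hz
      exact Filter.inter_mem (himg.mem_nhds hz.1)
        ((hψan z hz.1).continuousAt.preimage_mem_nhds (hU'o.mem_nhds hz.2))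
    set W : Set ((Fin n ⊕ Fin n) → ℂ) :=
      (A ⁻¹' V ∩ B ⁻¹' V) ∩ {z | ψ (A z) + ψ (B z) ∈ U} with hW
    have hWopen : IsOpen W := by
      rw [isOpen_iff_mem_nhds]
      intro z hz
      refine Filter.inter_mem (Filter.inter_mem ?_ ?_) ?_
      · exact hAcont.continuousAt.preimage_mem_nhds (hVopen.mem_nhds hz.1.1)
      · exact hBcont.continuousAt.preimage_mem_nhds (hVopen.mem_nhds hz.1.2)
      · have hcont : ContinuousAt (fun z => ψ (A z) + ψ (B z)) z :=
          (((hψan _ hz.1.1.1).continuousAt.comp hAcont.continuousAt).add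
            ((hψan _ hz.1.2.1).continuousAt.comp hBcont.continuousAt))
        exact hcont.preimage_mem_nhds (hUo.mem_nhds hz.2)
    have hcW : c ∈ W := by
      have hAc : A c = φ 0 := rfl
      have hBc : B c = φ 0 := rfl
      have hψ0 : ψ (φ 0) = 0 := hψφ 0 h0
      refine ⟨⟨⟨⟨0, h0, rfl⟩, ?_⟩, ⟨⟨0, h0, rfl⟩, ?_⟩⟩, ?_⟩
      · show ψ (A c) ∈ U'; rw [hAc, hψ0]; exact h0U'
      · show ψ (B c) ∈ U'; rw [hBc, hψ0]; exact h0U'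
      · show ψ (A c) + ψ (B c) ∈ U; rw [hAc, hBc, hψ0]; simpa using h0
    obtain ⟨r, hr, hball⟩ := Metric.isOpen_iff.mp hWopen c hcW
    set Ω : Set ((Fin n ⊕ Fin n) → ℂ) :=
      {z | ∑ i, Complex.normSq (z i - c i) < r ^ 2} with hΩ
    have hΩsub : Ω ⊆ W := by
      intro z hz
      apply hball
      rw [Metric.mem_ball, dist_pi_lt_iff hr]
      intro i
      rw [Complex.dist_eq]
      have h1 : Complex.normSq (z i - c i) ≤ ∑ j, Complex.normSq (z j - c j) :=
        Finset.single_le_sum (f := fun j => Complex.normSq (z j - c j))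
          (fun j _ => Complex.normSq_nonneg _) (Finset.mem_univ i)
      have h2 : ‖z i - c i‖ ^ 2 < r ^ 2 := by
        rw [Complex.sq_norm]; exact lt_of_le_of_lt h1 hz
      exact lt_of_pow_lt_pow_left₀ 2 hr.le h2
    have hΩopen : IsOpen Ω := by
      have hcont : Continuous fun z : (Fin n ⊕ Fin n) → ℂ =>
          ∑ i, Complex.normSq (z i - c i) :=
        continuous_finset_sum _ fun i _ =>
          Complex.continuous_normSq.comp ((continuous_apply i).sub continuous_const)
      exact isOpen_lt hcont continuous_const
    have hcΩ : c ∈ Ω := by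
      simp only [hΩ, Set.mem_setOf_eq, sub_self, map_zero, Finset.sum_const_zero]
      positivity
    refine ⟨Ω, hΩopen, semialg_ball c r, hcΩ, ?_, ?_, ?_⟩
    · intro z hz
      obtain ⟨⟨⟨hAφ, _⟩, ⟨hBφ, _⟩⟩, hsum⟩ := hΩsub hz
      exact ⟨hAφ, hBφ, hsum⟩
    · intro z hz
      obtain ⟨⟨⟨hAφ, _⟩, ⟨hBφ, _⟩⟩, hsum⟩ := hΩsub hz
      have hinner : AnalyticAt ℂ (fun z => ψ (A z) + ψ (B z)) z :=
        ((hψan _ hAφ).comp (restl_analytic z)).add ((hψan _ hBφ).comp (restr_analytic z))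
      exact AnalyticAt.comp (g := φ) (f := fun z => ψ (A z) + ψ (B z)) (hφan _ hsum) hinner
    · intro i
      obtain ⟨P, hP0, hPrel⟩ := hAAT i
      refine ⟨P, hP0, ?_⟩
      intro z hz
      obtain ⟨⟨⟨⟨a, ha, haz⟩, hzl'⟩, ⟨⟨b, hb, hbz⟩, hzr'⟩⟩, hsum⟩ := hΩsub hz
      have hua : ψ (A z) = a := by rw [← haz, hψφ a ha]
      have hvb : ψ (B z) = b := by rw [← hbz, hψφ b hb]
      have hφu : φ (ψ (A z)) = A z := by rw [hua, haz]
      have hφv : φ (ψ (B z)) = B z := by rw [hvb, hbz]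
      have hz_eq : Sum.elim (φ (ψ (A z))) (φ (ψ (B z))) = z := by
        rw [hφu, hφv]; funext w; cases w <;> rfl
      have := hPrel (ψ (A z)) hzl' (ψ (B z)) hzr' hsum
      rw [hz_eq] at this
      exact this
  · rintro ⟨Ω, hΩo, _, hcΩ, _, _, hPs⟩
    set G : ((Fin n → ℂ) × (Fin n → ℂ)) → ((Fin n ⊕ Fin n) → ℂ) :=
      fun p => Sum.elim (φ p.1) (φ p.2) with hG
    have hGc : ContinuousAt G ((0 : Fin n → ℂ), (0 : Fin n → ℂ)) := by
      have hφ0 : ContinuousAt φ 0 := (hφan 0 h0).continuousAt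
      have hfst : ContinuousAt (fun p : (Fin n → ℂ) × (Fin n → ℂ) => φ p.1) (0, 0) :=
        ContinuousAt.comp (g := φ) (f := Prod.fst) hφ0 continuousAt_fst
      have hsnd : ContinuousAt (fun p : (Fin n → ℂ) × (Fin n → ℂ) => φ p.2) (0, 0) :=
        ContinuousAt.comp (g := φ) (f := Prod.snd) hφ0 continuousAt_snd
      rw [continuousAt_pi]
      intro w
      cases w with
      | inl i =>
        exact ContinuousAt.comp (g := fun x : Fin n → ℂ => x i) (continuous_apply i).continuousAt hfst
      | inr j =>
        exact ContinuousAt.comp (g := fun x : Fin n → ℂ => x j) (continuous_apply j).continuousAt hsnd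
    have hnhds : G ⁻¹' Ω ∈ nhds ((0 : Fin n → ℂ), (0 : Fin n → ℂ)) :=
      hGc.preimage_mem_nhds (hΩo.mem_nhds hcΩ)
    obtain ⟨ε, hε, hball⟩ := Metric.mem_nhds_iff.mp hnhds
    refine ⟨U ∩ Metric.ball 0 ε, Set.inter_subset_left, hUo.inter Metric.isOpen_ball,
      ⟨h0, Metric.mem_ball_self hε⟩, ?_⟩
    intro i
    obtain ⟨P, hP0, hrel⟩ := hPs i
    refine ⟨P, hP0, ?_⟩
    intro u hu v hv hsum
    have hmem : ((u, v) : (Fin n → ℂ) × (Fin n → ℂ)) ∈ Metric.ball (0, 0) ε := by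
      rw [Metric.mem_ball, Prod.dist_eq]
      exact max_lt (Metric.mem_ball.mp hu.2) (Metric.mem_ball.mp hv.2)
    have hzΩ : Sum.elim (φ u) (φ v) ∈ Ω := hball hmem
    have hthis := hrel _ hzΩ
    have h1 : (fun i' => Sum.elim (φ u) (φ v) (Sum.inl i')) = φ u := rfl
    have h2 : (fun j => Sum.elim (φ u) (φ v) (Sum.inr j)) = φ v := rfl
    rw [h1, h2, hψφ u hu.1, hψφ v hv.1] at hthis
    exact hthis
end
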